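/- Let p > 1 and g : [0, ∞) → [0, ∞) be C¹, nondecreasing with g(0)=0. Define φ(t) = (1+g(t))^{p−1}, Φ(t) = ∫₀ᵗ φ(s) ds, 𝒥(t) = t·φ(t) − p·Φ(t), and j(t) = t g′(t) − g(t). Then for all t > 0 with g′(t) > 0: 𝒥′(t) = (p−1)(1+g(t))^{p−2}(j(t) − 1) = φ′(t)·(j(t)−1)/g′(t). Consequently, if g is superlinear and convex near ∞, then lim_{t→∞} 𝒥(t)/φ(t) = ∞. -/

import Mathlib

open Set Filter Real MeasureTheory
open scoped Topology

/-- With `φ(t) = (1+g(t))^(p−1)`, `Φ(t) = ∫₀ᵗ φ`, `J(t) = tφ(t) − pΦ(t)`,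
`j(t) = tg′(t) − g(t)`: for `t > 0` with `g′(t) > 0`,
`J′(t) = (p−1)(1+g(t))^(p−2)(j(t)−1) = φ′(t)(j(t)−1)/g′(t)`; consequently if `g` is
superlinear and convex near `∞`, then `lim_{t→∞} J(t)/φ(t) = ∞`. -/
theorem stmt_16 (p : ℝ) (hp : 1 < p) (g g' : ℝ → ℝ)
    (hg0 : g 0 = 0) (hgpos : ∀ t : ℝ, 0 ≤ t → 0 ≤ g t)
    (hg' : ∀ t : ℝ, 0 ≤ t → HasDerivWithinAt g (g' t) (Set.Ici 0) t)
    (hg'c : ContinuousOn g' (Set.Ici 0))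
    (hmono : MonotoneOn g (Set.Ici 0))
    (φ Φ J j : ℝ → ℝ)
    (hφ : ∀ t : ℝ, φ t = (1 + g t) ^ (p - 1))
    (hΦ : ∀ t : ℝ, Φ t = ∫ s in (0:ℝ)..t, φ s)
    (hJ : ∀ t : ℝ, J t = t * φ t - p * Φ t)
    (hj : ∀ t : ℝ, j t = t * g' t - g t) :
    (∀ t : ℝ, 0 < t → 0 < g' t →
      HasDerivWithinAt J ((p - 1) * (1 + g t) ^ (p - 2) * (j t - 1)) (Set.Ici 0) t ∧
      (p - 1) * (1 + g t) ^ (p - 2) * (j t - 1)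
        = ((p - 1) * (1 + g t) ^ (p - 2) * g' t) * (j t - 1) / g' t) ∧
    ((Filter.Tendsto (fun t => g t / t) Filter.atTop Filter.atTop ∧
        ∃ A : ℝ, 0 ≤ A ∧ MonotoneOn g' (Set.Ici A)) →
      Filter.Tendsto (fun t => J t / φ t) Filter.atTop Filter.atTop) := by
  have hp1 : (0:ℝ) < p - 1 := by linarith
  have hφf : φ = fun t : ℝ => (1 + g t) ^ (p - 1) := funext hφ
  subst hφf
  have hΦf : Φ = fun t : ℝ => ∫ s in (0:ℝ)..t, (1 + g s) ^ (p - 1) := funext fun t => by rw [hΦ]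
  subst hΦf
  have hJf : J = fun t : ℝ =>
      t * (1 + g t) ^ (p - 1) - p * ∫ s in (0:ℝ)..t, (1 + g s) ^ (p - 1) :=
    funext fun t => by rw [hJ]
  subst hJf
  have hjf : j = fun t : ℝ => t * g' t - g t := funext hj
  subst hjf
  have hgc : ContinuousOn g (Ici 0) := fun t ht => (hg' t ht).continuousWithinAt
  have h1g : ∀ t : ℝ, 0 ≤ t → 0 < 1 + g t := fun t ht => by linarith [hgpos t ht]
  have hgderiv : ∀ t : ℝ, 0 < t → HasDerivAt g (g' t) t := fun t ht =>
    (hg' t ht.le).hasDerivAt (Ici_mem_nhds ht)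
  have hφderiv : ∀ t : ℝ, 0 < t →
      HasDerivAt (fun u : ℝ => (1 + g u) ^ (p - 1)) ((p - 1) * (1 + g t) ^ (p - 2) * g' t) t := by
    intro t ht
    have h := (HasDerivAt.const_add 1 (hgderiv t ht)).rpow_const
      (p := p - 1) (Or.inl (h1g t ht.le).ne')
    convert h using 1
    rw [show p - 1 - 1 = p - 2 by ring]
    ring
  have hφcont : ContinuousOn (fun u : ℝ => (1 + g u) ^ (p - 1)) (Ici 0) :=
    (continuousOn_const.add hgc).rpow_const fun t ht => Or.inl (h1g t ht).ne'
  have hφint : ∀ x : ℝ, 0 ≤ x →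
      IntervalIntegrable (fun u : ℝ => (1 + g u) ^ (p - 1)) volume 0 x := by
    intro x hx
    apply (hφcont.mono ?_).intervalIntegrable
    rw [uIcc_of_le hx]
    exact Icc_subset_Ici_self
  have hΦderiv : ∀ t : ℝ, 0 < t →
      HasDerivAt (fun u : ℝ => ∫ s in (0:ℝ)..u, (1 + g s) ^ (p - 1)) ((1 + g t) ^ (p - 1)) t := by
    intro t ht
    exact intervalIntegral.integral_hasDerivAt_right (hφint t ht.le)
      ((ContinuousOn.stronglyMeasurableAtFilter isOpen_Ioi
        (hφcont.mono Ioi_subset_Ici_self)) t ht)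
      ((hφcont t (le_of_lt ht)).continuousAt (Ici_mem_nhds ht))
  have hJderiv : ∀ t : ℝ, 0 < t →
      HasDerivAt (fun u : ℝ =>
          u * (1 + g u) ^ (p - 1) - p * ∫ s in (0:ℝ)..u, (1 + g s) ^ (p - 1))
        ((p - 1) * (1 + g t) ^ (p - 2) * (t * g' t - g t - 1)) t := by
    intro t ht
    have h := ((hasDerivAt_id t).mul (hφderiv t ht)).sub ((hΦderiv t ht).const_mul p)
    simp only [id_eq] at h
    convert h using 1
    · rfl
    · rfl
    · rfl
    have hpow : (1 + g t) ^ (p - 1) = (1 + g t) ^ (p - 2) * (1 + g t) := by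
      rw [show p - 1 = p - 2 + 1 by ring, Real.rpow_add_one (h1g t ht.le).ne']
    rw [hpow]; ring
  constructor
  · intro t ht hg't
    constructor
    · exact (hJderiv t ht).hasDerivWithinAt
    · field_simp
  · rintro ⟨hsup, A, hA0, hA⟩
    -- MVT-type estimate
    have key : ∀ a b K : ℝ, 0 ≤ a → a ≤ b → (∀ u, u ∈ Icc a b → g' u ≤ K) →
        g b - g a ≤ K * (b - a) := by
      intro a b K ha hab hK
      have hmonoF : MonotoneOn (fun u => K * u - g u) (Icc a b) := by
        apply monotoneOn_of_hasDerivWithinAt_nonneg (convex_Icc a b)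
          (f' := fun u => K - g' u)
        · exact (continuousOn_const.mul continuousOn_id).sub
            (hgc.mono (fun x hx => ha.trans hx.1))
        · intro x hx
          rw [interior_Icc] at hx
          have := (((hasDerivAt_id x).const_mul K).sub
            (hgderiv x (ha.trans_lt hx.1))).hasDerivWithinAt (s := interior (Icc a b))
          simp only [mul_one] at this
          exact this
        · intro x hx
          rw [interior_Icc] at hx
          have := hK x (Ioo_subset_Icc_self hx)
          linarith
      have h := hmonoF (left_mem_Icc.2 hab) (right_mem_Icc.2 hab) hab
      simp only at h
      nlinarith
    -- g' is eventually larger than any constant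
    have hg'big : ∀ M : ℝ, ∃ T, A ≤ T ∧ ∀ t, T ≤ t → M ≤ g' t := by
      intro M
      by_contra hcon
      push_neg at hcon
      have hall : ∀ t, A ≤ t → g' t < M := by
        intro t hAt
        by_contra hge
        push_neg at hge
        obtain ⟨s, hts, hsM⟩ := hcon t hAt
        have := hA hAt (hAt.trans hts) hts
        linarith
      obtain ⟨t, htC, htA1⟩ := ((hsup.eventually_ge_atTop
        (g A + |M| + |M| * A + 1)).and (eventually_ge_atTop (max A 1))).exists
      have htA : A ≤ t := le_trans (le_max_left _ _) htA1
      have ht1 : (1:ℝ) ≤ t := le_trans (le_max_right _ _) htA1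
      have ht0 : 0 < t := lt_of_lt_of_le one_pos ht1
      have hkey := key A t M hA0 htA (fun u hu => (hall u hu.1).le)
      have hgA : 0 ≤ g A := hgpos A hA0
      have hgt : (g A + |M| + |M| * A + 1) * t ≤ g t := (le_div_iff₀ ht0).mp htC
      nlinarith [mul_nonneg hgA (show (0:ℝ) ≤ t - 1 by linarith),
        mul_nonneg (show (0:ℝ) ≤ |M| - M by linarith [le_abs_self M]) ht0.le,
        mul_nonneg (mul_nonneg (abs_nonneg M) hA0) (show (0:ℝ) ≤ t - 1 by linarith),
        mul_nonneg (show (0:ℝ) ≤ |M| + M by linarith [neg_le_abs M]) hA0]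
    -- g tends to infinity
    have hgtop : Tendsto g atTop atTop := by
      apply tendsto_atTop_mono' atTop ?_ hsup
      filter_upwards [eventually_ge_atTop (1:ℝ)] with t ht
      exact div_le_self (hgpos t (by linarith)) ht
    have hφtop : Tendsto (fun t => (1 + g t) ^ (p - 1)) atTop atTop :=
      (tendsto_rpow_atTop hp1).comp (tendsto_atTop_add_const_left atTop 1 hgtop)
    -- the main eventual inequality
    have hMain : ∀ M : ℝ, ∃ T : ℝ, 0 < T ∧ ∀ t, T ≤ t → M * g' t ≤ t * g' t - g t - 1 := by
      intro M
      set T0 : ℝ := max A M + 1 with hT0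
      have hT0A : A ≤ T0 := le_trans (le_max_left A M) (by linarith)
      have hT0M : M + 1 ≤ T0 := by have := le_max_right A M; linarith
      have hT0pos : 0 < T0 := by have := le_max_left A M; linarith
      obtain ⟨T1, hT1A, hT1⟩ := hg'big (g T0 + 1)
      refine ⟨max T0 T1, lt_of_lt_of_le hT0pos (le_max_left _ _), ?_⟩
      intro t ht
      have htT0 : T0 ≤ t := (le_max_left _ _).trans ht
      have htT1 : T1 ≤ t := (le_max_right _ _).trans ht
      have hg't : g T0 + 1 ≤ g' t := hT1 t htT1
      have hkey := key T0 t (g' t) hT0pos.le htT0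
        (fun u hu => hA (le_trans hT0A hu.1) (hT0A.trans htT0) hu.2)
      have hgT0 : 0 ≤ g T0 := hgpos T0 hT0pos.le
      nlinarith [hkey, mul_nonneg (show (0:ℝ) ≤ T0 - M - 1 by linarith)
        (show (0:ℝ) ≤ g' t by linarith)]
    rw [tendsto_atTop]
    intro C
    obtain ⟨T, hTpos, hT⟩ := hMain (C + 1)
    have hmonoK : MonotoneOn (fun u : ℝ =>
        (u * (1 + g u) ^ (p - 1) - p * ∫ s in (0:ℝ)..u, (1 + g s) ^ (p - 1))
          - (C + 1) * (1 + g u) ^ (p - 1)) (Ici T) := by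
      apply monotoneOn_of_hasDerivWithinAt_nonneg (convex_Ici T)
        (f' := fun u => (p - 1) * (1 + g u) ^ (p - 2) * (u * g' u - g u - 1)
          - (C + 1) * ((p - 1) * (1 + g u) ^ (p - 2) * g' u))
      · intro u hu
        exact ((hJderiv u (hTpos.trans_le hu)).sub
          ((hφderiv u (hTpos.trans_le hu)).const_mul (C + 1))).continuousAt.continuousWithinAt
      · intro u hu
        rw [interior_Ici] at hu
        exact ((hJderiv u (hTpos.trans hu)).sub
          ((hφderiv u (hTpos.trans hu)).const_mul (C + 1))).hasDerivWithinAt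
      · intro u hu
        rw [interior_Ici] at hu
        have hu0 : 0 < u := hTpos.trans hu
        have hc : 0 < (p - 1) * (1 + g u) ^ (p - 2) :=
          mul_pos hp1 (rpow_pos_of_pos (h1g u hu0.le) _)
        have h2 := hT u hu.le
        nlinarith [mul_le_mul_of_nonneg_left h2 hc.le]
    have hev := (hφtop.eventually_ge_atTop
      ((C + 1) * (1 + g T) ^ (p - 1)
        - (T * (1 + g T) ^ (p - 1) - p * ∫ s in (0:ℝ)..T, (1 + g s) ^ (p - 1)) + 1)).and
      (eventually_ge_atTop T)
    filter_upwards [hev] with t ht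
    obtain ⟨hφt, htT⟩ := ht
    have hφpos : 0 < (1 + g t) ^ (p - 1) := rpow_pos_of_pos (h1g t (hTpos.le.trans htT)) _
    have hJT := hmonoK self_mem_Ici htT htT
    simp only at hJT hφt ⊢
    rw [le_div_iff₀ hφpos]
    linarith
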